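/- Let a_u ≤ b_u, c_u ≤ d_u, a_v ≤ b_v, c_v ≤ d_v be real numbers, and let T_u = convexHull ℝ {(a_u,1), (b_u,1), (c_u,0), (d_u,0)} and T_v = convexHull ℝ {(a_v,1), (b_v,1), (c_v,0), (d_v,0)} be the corresponding trapezoids in ℝ². Then T_u ∩ T_v = ∅ if and only if (b_u < a_v and d_u < c_v) or (b_v < a_u and d_v < c_u). -/

import Mathlib

private lemma mem_hull2 {s : Set (ℝ × ℝ)} {x y : ℝ × ℝ} (hx : x ∈ s) (hy : y ∈ s)
    {t : ℝ} (h0 : 0 ≤ t) (h1 : t ≤ 1) : (1 - t) • x + t • y ∈ convexHull ℝ s :=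
  (convex_convexHull ℝ s) (subset_convexHull ℝ s hx) (subset_convexHull ℝ s hy)
    (by linarith) h0 (by ring)

private lemma seg_mem (a b x c : ℝ) (hax : a ≤ x) (hxb : x ≤ b) {s : Set (ℝ × ℝ)}
    (ha : ((a, c) : ℝ × ℝ) ∈ s) (hb : ((b, c) : ℝ × ℝ) ∈ s) :
    ((x, c) : ℝ × ℝ) ∈ convexHull ℝ s := by
  rcases eq_or_lt_of_le (hax.trans hxb) with h | h
  · have hx : x = a := le_antisymm (h ▸ hxb) hax
    subst hx
    exact subset_convexHull ℝ s ha
  · set t := (x - a) / (b - a) with ht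
    have h0 : 0 ≤ t := div_nonneg (by linarith) (by linarith)
    have h1 : t ≤ 1 := (div_le_one (by linarith)).2 (by linarith)
    have hm := mem_hull2 ha hb h0 h1
    have heq : (1 - t) • ((a, c) : ℝ × ℝ) + t • ((b, c) : ℝ × ℝ) = (x, c) := by
      have hba : b - a ≠ 0 := sub_ne_zero.mpr h.ne'
      have htba : t * (b - a) = x - a := by rw [ht]; field_simp
      simp only [Prod.smul_mk, Prod.mk_add_mk, Prod.mk.injEq, smul_eq_mul]
      exact ⟨by linear_combination htba, by ring⟩
    rwa [heq] at hm

private lemma cross_mem (a b c d : ℝ) (hcd : c ≤ d) (hba : b ≤ a) {s t : Set (ℝ × ℝ)}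
    (hc : ((c, 0) : ℝ × ℝ) ∈ s) (ha : ((a, 1) : ℝ × ℝ) ∈ s)
    (hd : ((d, 0) : ℝ × ℝ) ∈ t) (hb : ((b, 1) : ℝ × ℝ) ∈ t) :
    ∃ p, p ∈ convexHull ℝ s ∧ p ∈ convexHull ℝ t := by
  set D := (d - c) + (a - b) with hD
  have hD0 : 0 ≤ D := by linarith
  rcases eq_or_lt_of_le hD0 with h | h
  · -- D = 0 so c = d and a = b
    have hdc : d = c := by linarith
    exact ⟨(c, 0), subset_convexHull ℝ s hc, subset_convexHull ℝ t (by rwa [hdc] at hd)⟩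
  · set u := (d - c) / D with hu
    have h0 : 0 ≤ u := div_nonneg (by linarith) (by linarith)
    have h1 : u ≤ 1 := (div_le_one (by linarith)).2 (by linarith)
    refine ⟨(1 - u) • ((c, 0) : ℝ × ℝ) + u • ((a, 1) : ℝ × ℝ),
      mem_hull2 hc ha h0 h1, ?_⟩
    have heq : (1 - u) • ((c, 0) : ℝ × ℝ) + u • ((a, 1) : ℝ × ℝ)
        = (1 - u) • ((d, 0) : ℝ × ℝ) + u • ((b, 1) : ℝ × ℝ) := by
      have hDne : D ≠ 0 := ne_of_gt h
      have huD : u * D = d - c := by rw [hu]; field_simp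
      rw [hD] at huD
      simp only [Prod.smul_mk, Prod.mk_add_mk, Prod.mk.injEq, smul_eq_mul]
      exact ⟨by linear_combination huD, by simp⟩
    rw [heq]
    exact mem_hull2 hd hb h0 h1

private lemma trap_subset_left (a b c d : ℝ) (h1 : a ≤ b) (h2 : c ≤ d) :
    convexHull ℝ {((a, 1) : ℝ × ℝ), (b, 1), (c, 0), (d, 0)} ⊆
      {p : ℝ × ℝ | 0 ≤ p.2 ∧ p.2 ≤ 1 ∧ p.1 ≤ b * p.2 + d * (1 - p.2)} := by
  apply convexHull_min
  · intro p hp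
    simp only [Set.mem_insert_iff, Set.mem_singleton_iff] at hp
    rcases hp with h | h | h | h <;> subst h <;>
      simp only [Set.mem_setOf_eq] <;> norm_num <;> linarith
  · intro p hp q hq α β hα hβ hαβ
    simp only [Set.mem_setOf_eq] at hp hq ⊢
    obtain ⟨hp1, hp2, hp3⟩ := hp
    obtain ⟨hq1, hq2, hq3⟩ := hq
    simp only [Prod.fst_add, Prod.snd_add, Prod.smul_fst, Prod.smul_snd, smul_eq_mul]
    refine ⟨by nlinarith, by nlinarith, ?_⟩
    have e1 := mul_le_mul_of_nonneg_left hp3 hα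
    have e2 := mul_le_mul_of_nonneg_left hq3 hβ
    have hb2 : β = 1 - α := by linarith
    calc α * p.1 + β * q.1
        ≤ α * (b * p.2 + d * (1 - p.2)) + β * (b * q.2 + d * (1 - q.2)) := add_le_add e1 e2
      _ = b * (α * p.2 + β * q.2) + d * (1 - (α * p.2 + β * q.2)) := by rw [hb2]; ring

private lemma trap_subset_right (a b c d : ℝ) (h1 : a ≤ b) (h2 : c ≤ d) :
    convexHull ℝ {((a, 1) : ℝ × ℝ), (b, 1), (c, 0), (d, 0)} ⊆
      {p : ℝ × ℝ | 0 ≤ p.2 ∧ p.2 ≤ 1 ∧ a * p.2 + c * (1 - p.2) ≤ p.1} := by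
  apply convexHull_min
  · intro p hp
    simp only [Set.mem_insert_iff, Set.mem_singleton_iff] at hp
    rcases hp with h | h | h | h <;> subst h <;>
      simp only [Set.mem_setOf_eq] <;> norm_num <;> linarith
  · intro p hp q hq α β hα hβ hαβ
    simp only [Set.mem_setOf_eq] at hp hq ⊢
    obtain ⟨hp1, hp2, hp3⟩ := hp
    obtain ⟨hq1, hq2, hq3⟩ := hq
    simp only [Prod.fst_add, Prod.snd_add, Prod.smul_fst, Prod.smul_snd, smul_eq_mul]
    refine ⟨by nlinarith, by nlinarith, ?_⟩
    have e1 := mul_le_mul_of_nonneg_left hp3 hα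
    have e2 := mul_le_mul_of_nonneg_left hq3 hβ
    have hb2 : β = 1 - α := by linarith
    calc a * (α * p.2 + β * q.2) + c * (1 - (α * p.2 + β * q.2))
        = α * (a * p.2 + c * (1 - p.2)) + β * (a * q.2 + c * (1 - q.2)) := by rw [hb2]; ring
      _ ≤ α * p.1 + β * q.1 := add_le_add e1 e2

private lemma trap_disjoint (au bu cu du av bv cv dv : ℝ)
    (hu1 : au ≤ bu) (hu2 : cu ≤ du) (hv1 : av ≤ bv) (hv2 : cv ≤ dv)
    (h1 : bu < av) (h2 : du < cv) :
    convexHull ℝ {((au, 1) : ℝ × ℝ), (bu, 1), (cu, 0), (du, 0)} ∩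
        convexHull ℝ {((av, 1) : ℝ × ℝ), (bv, 1), (cv, 0), (dv, 0)} = ∅ := by
  rw [Set.eq_empty_iff_forall_notMem]
  rintro p ⟨hpu, hpv⟩
  have hL := trap_subset_left au bu cu du hu1 hu2 hpu
  have hR := trap_subset_right av bv cv dv hv1 hv2 hpv
  simp only [Set.mem_setOf_eq] at hL hR
  obtain ⟨hy0, hy1, hx1⟩ := hL
  obtain ⟨-, -, hx2⟩ := hR
  rcases eq_or_lt_of_le hy0 with h | h
  · rw [← h] at hx1 hx2
    simp at hx1 hx2
    linarith
  · have hbv : bu * p.2 < av * p.2 := mul_lt_mul_of_pos_right h1 h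
    have hdc : du * (1 - p.2) ≤ cv * (1 - p.2) :=
      mul_le_mul_of_nonneg_right h2.le (by linarith)
    linarith

/-- Two trapezoids between the lines `y = 1` and `y = 0` are disjoint if and only if one of
them lies entirely to the left of the other on both lines. -/
theorem stmt15 (au bu cu du av bv cv dv : ℝ)
    (hu1 : au ≤ bu) (hu2 : cu ≤ du) (hv1 : av ≤ bv) (hv2 : cv ≤ dv) :
    convexHull ℝ {((au, 1) : ℝ × ℝ), (bu, 1), (cu, 0), (du, 0)} ∩
        convexHull ℝ {((av, 1) : ℝ × ℝ), (bv, 1), (cv, 0), (dv, 0)} = ∅ ↔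
      (bu < av ∧ du < cv) ∨ (bv < au ∧ dv < cu) := by
  constructor
  · intro hemp
    by_contra hcon
    push_neg at hcon
    obtain ⟨h1, h2⟩ := hcon
    have hA : av ≤ bu ∨ cv ≤ du := by
      rcases le_or_gt av bu with h | h
      · exact Or.inl h
      · exact Or.inr (h1 h)
    have hB : au ≤ bv ∨ cu ≤ dv := by
      rcases le_or_gt au bv with h | h
      · exact Or.inl h
      · exact Or.inr (h2 h)
    have hmemu1 : ((au, 1) : ℝ × ℝ) ∈ ({(au, 1), (bu, 1), (cu, 0), (du, 0)} : Set (ℝ × ℝ)) := by simp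
    have hmemu2 : ((bu, 1) : ℝ × ℝ) ∈ ({(au, 1), (bu, 1), (cu, 0), (du, 0)} : Set (ℝ × ℝ)) := by simp
    have hmemu3 : ((cu, 0) : ℝ × ℝ) ∈ ({(au, 1), (bu, 1), (cu, 0), (du, 0)} : Set (ℝ × ℝ)) := by simp
    have hmemu4 : ((du, 0) : ℝ × ℝ) ∈ ({(au, 1), (bu, 1), (cu, 0), (du, 0)} : Set (ℝ × ℝ)) := by simp
    have hmemv1 : ((av, 1) : ℝ × ℝ) ∈ ({(av, 1), (bv, 1), (cv, 0), (dv, 0)} : Set (ℝ × ℝ)) := by simp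
    have hmemv2 : ((bv, 1) : ℝ × ℝ) ∈ ({(av, 1), (bv, 1), (cv, 0), (dv, 0)} : Set (ℝ × ℝ)) := by simp
    have hmemv3 : ((cv, 0) : ℝ × ℝ) ∈ ({(av, 1), (bv, 1), (cv, 0), (dv, 0)} : Set (ℝ × ℝ)) := by simp
    have hmemv4 : ((dv, 0) : ℝ × ℝ) ∈ ({(av, 1), (bv, 1), (cv, 0), (dv, 0)} : Set (ℝ × ℝ)) := by simp
    have hne : ∃ p, p ∈ convexHull ℝ ({((au, 1) : ℝ × ℝ), (bu, 1), (cu, 0), (du, 0)} : Set (ℝ × ℝ)) ∧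
        p ∈ convexHull ℝ ({((av, 1) : ℝ × ℝ), (bv, 1), (cv, 0), (dv, 0)} : Set (ℝ × ℝ)) := by
      rcases hA with hA | hA <;> rcases hB with hB | hB
      · -- top intervals overlap: point (max au av, 1)
        refine ⟨(max au av, 1), ?_, ?_⟩
        · exact seg_mem au bu _ 1 (le_max_left _ _) (max_le hu1 hA) hmemu1 hmemu2
        · exact seg_mem av bv _ 1 (le_max_right _ _) (max_le hB hv1) hmemv1 hmemv2
      · -- av ≤ bu and cu ≤ dv : cross
        exact cross_mem bu av cu dv hB hA hmemu3 hmemu2 hmemv4 hmemv1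
      · -- cv ≤ du and au ≤ bv : cross (swap roles)
        obtain ⟨p, hp1, hp2⟩ := cross_mem bv au cv du hA hB hmemv3 hmemv2 hmemu4 hmemu1
        exact ⟨p, hp2, hp1⟩
      · -- bottom intervals overlap: point (max cu cv, 0)
        refine ⟨(max cu cv, 0), ?_, ?_⟩
        · exact seg_mem cu du _ 0 (le_max_left _ _) (max_le hu2 hA) hmemu3 hmemu4
        · exact seg_mem cv dv _ 0 (le_max_right _ _) (max_le hB hv2) hmemv3 hmemv4
    obtain ⟨p, hp1, hp2⟩ := hne
    rw [Set.eq_empty_iff_forall_notMem] at hemp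
    exact hemp p ⟨hp1, hp2⟩
  · rintro (⟨h1, h2⟩ | ⟨h1, h2⟩)
    · exact trap_disjoint au bu cu du av bv cv dv hu1 hu2 hv1 hv2 h1 h2
    · rw [Set.inter_comm]
      exact trap_disjoint av bv cv dv au bu cu du hv1 hv2 hu1 hu2 h1 h2
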